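/- Every finite simple graph G is representable in ℝ^{|G|−1}, i.e., there exists f : V(G) → ℝ^{|G|−1} such that ‖f(x) − f(x')‖ = ‖f(y) − f(y')‖ if and only if ({x,x'} and {y,y'} are both edges) or (both non-edges) of G (for x ≠ x', y ≠ y'). -/

import Mathlib

open Finset Matrix

section helpers
variable {V : Type*} [Fintype V] [DecidableEq V]

theorem my_gram_psd (G : SimpleGraph V) [DecidableRel G.Adj] :
    Matrix.PosSemidef ((1 : Matrix V V ℝ) +
      (1 / (2 * (Fintype.card V : ℝ) + 1)) •
        (Matrix.of fun i j => if G.Adj i j then (1:ℝ) else 0)) := by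
  set n : ℝ := (Fintype.card V : ℝ) with hn'
  set t : ℝ := 1 / (2 * n + 1) with ht'
  have hn : (0:ℝ) ≤ n := Nat.cast_nonneg _
  have ht : 0 < t := by positivity
  refine Matrix.PosSemidef.of_dotProduct_mulVec_nonneg ?_ ?_
  · unfold Matrix.IsHermitian
    ext i j
    simp [Matrix.conjTranspose_apply, Matrix.one_apply, G.adj_comm i j, eq_comm]
  · intro x
    have key : |∑ i, ∑ j, x i * ((if G.Adj i j then (1:ℝ) else 0) * x j)| ≤ n * ∑ i, x i ^ 2 := by
      calc |∑ i, ∑ j, x i * ((if G.Adj i j then (1:ℝ) else 0) * x j)|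
          ≤ ∑ i, ∑ j, |x i| * |x j| := by
            refine (Finset.abs_sum_le_sum_abs _ _).trans ?_
            refine Finset.sum_le_sum fun i _ => (Finset.abs_sum_le_sum_abs _ _).trans ?_
            refine Finset.sum_le_sum fun j _ => ?_
            rcases ite_eq_or_eq (G.Adj i j) (1:ℝ) 0 with h | h <;> rw [h] <;>
              simp [abs_mul, mul_comm]
            · positivity
        _ = (∑ i, |x i|) ^ 2 := by rw [sq, Finset.sum_mul_sum]
        _ ≤ (Fintype.card V) * ∑ i, |x i| ^ 2 := by
            simpa using sq_sum_le_card_mul_sum_sq (s := Finset.univ) (f := fun i => |x i|)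
        _ = n * ∑ i, x i ^ 2 := by simp [sq_abs, hn']
    have expand : dotProduct (star x)
        (((1 : Matrix V V ℝ) + t • (Matrix.of fun i j => if G.Adj i j then (1:ℝ) else 0)) *ᵥ x)
        = (∑ i, x i ^ 2) + t * ∑ i, ∑ j, x i * ((if G.Adj i j then (1:ℝ) else 0) * x j) := by
      simp [dotProduct, Matrix.mulVec, Matrix.add_mulVec, Matrix.one_mulVec, mul_add,
        Finset.sum_add_distrib, Finset.mul_sum, sq, mul_assoc, mul_left_comm,
        Matrix.one_apply, ite_mul, mul_ite, mul_zero, zero_mul, mul_one, add_mul,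
        Finset.sum_add_distrib, Finset.sum_ite_eq, Finset.sum_ite_eq', Finset.mem_univ]
    rw [expand]
    have h2 : t * n ≤ 1/2 := by
      rw [ht', div_mul_eq_mul_div, one_mul, div_le_div_iff₀ (by positivity) (by norm_num)]
      linarith
    have hs : (0:ℝ) ≤ ∑ i, x i ^ 2 := Finset.sum_nonneg fun i _ => sq_nonneg _
    nlinarith [abs_nonneg (∑ i, ∑ j, x i * ((if G.Adj i j then (1:ℝ) else 0) * x j)),
      neg_abs_le (∑ i, ∑ j, x i * ((if G.Adj i j then (1:ℝ) else 0) * x j)),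
      mul_le_mul_of_nonneg_left key ht.le]
end helpers

theorem my_embed_dist {k m : ℕ} (h : k ≤ m) :
    ∃ ψ : EuclideanSpace ℝ (Fin k) → EuclideanSpace ℝ (Fin m),
      ∀ a b, dist (ψ a) (ψ b) = dist a b := by
  refine ⟨fun z => WithLp.toLp 2 (fun i => if h' : (i : ℕ) < k then z ⟨i, h'⟩ else 0), fun a b => ?_⟩
  rw [EuclideanSpace.dist_eq, EuclideanSpace.dist_eq]
  congr 1
  rw [← Finset.sum_subset (Finset.subset_univ
      ((Finset.univ : Finset (Fin k)).map (Fin.castLEEmb h)))]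
  · rw [Finset.sum_map]
    refine Finset.sum_congr rfl fun j _ => ?_
    have hj : ((Fin.castLEEmb h) j : ℕ) < k := by simp [j.isLt]
    simp only
    rw [dif_pos hj]
    congr 2 <;> simp [Fin.ext_iff]
  · intro i _ hi
    have : ¬ ((i : ℕ) < k) := by
      intro hik
      exact hi (by simp only [Finset.mem_map, Finset.mem_univ]
                   exact ⟨⟨i, hik⟩, trivial, by simp [Fin.ext_iff]⟩)
    simp [this]

theorem stmt_10 {V : Type*} [Fintype V] (G : SimpleGraph V) :
    ∃ f : V → EuclideanSpace ℝ (Fin (Fintype.card V - 1)),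
      ∀ x x' y y' : V, x ≠ x' → y ≠ y' →
        (dist (f x) (f x') = dist (f y) (f y') ↔ (G.Adj x x' ↔ G.Adj y y')) := by
  classical
  cases isEmpty_or_nonempty V with
  | inl hV => exact ⟨fun _ => 0, fun x => isEmptyElim x⟩
  | inr hV =>
  obtain ⟨x₀⟩ := hV
  set n : ℝ := (Fintype.card V : ℝ) with hn'
  set t : ℝ := 1 / (2 * n + 1) with ht'
  have ht : 0 < t := by positivity
  set A : Matrix V V ℝ := Matrix.of fun i j => if G.Adj i j then (1:ℝ) else 0 with hA'
  set M : Matrix V V ℝ := 1 + t • A with hM'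
  obtain ⟨B, hB⟩ : ∃ B : Matrix V V ℝ, M = Bᴴ * B := by
    open scoped MatrixOrder in
    refine ⟨CFC.sqrt M, ?_⟩
    rw [← Matrix.star_eq_conjTranspose, (CFC.sqrt_nonneg M).isSelfAdjoint.star_eq,
      CFC.sqrt_mul_sqrt_self M (my_gram_psd G).nonneg]
  -- the Gram vectors
  set g : V → EuclideanSpace ℝ V := fun x => WithLp.toLp 2 (fun k => B k x) with hg'
  have gram : ∀ u v, (∑ k, B k u * B k v) = M u v := by
    intro u v
    have hMB : M = Bᴴ * B := hB
    rw [hMB]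
    simp [Matrix.mul_apply, Matrix.conjTranspose_apply]
  have hMoff : ∀ u v : V, u ≠ v → M u v = t * (if G.Adj u v then (1:ℝ) else 0) := by
    intro u v huv
    simp [hM', hA', Matrix.one_apply, huv]
  have hMdiag : ∀ u : V, M u u = 1 := by
    intro u
    simp [hM', hA', Matrix.one_apply]
  have distg : ∀ u v : V, u ≠ v →
      dist (g u) (g v) ^ 2 = 2 - 2 * t * (if G.Adj u v then (1:ℝ) else 0) := by
    intro u v huv
    rw [EuclideanSpace.dist_eq, Real.sq_sqrt (Finset.sum_nonneg fun i _ => sq_nonneg _)]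
    have : ∀ k, dist (g u k) (g v k) ^ 2
        = B k u * B k u - 2 * (B k u * B k v) + B k v * B k v := by
      intro k
      rw [Real.dist_eq, sq_abs, hg']
      ring
    simp_rw [this, Finset.sum_add_distrib, Finset.sum_sub_distrib, ← Finset.mul_sum]
    rw [gram u u, gram u v, gram v v, hMdiag, hMdiag, hMoff u v huv]
    ring
  -- translate & reduce dimension
  set h : V → EuclideanSpace ℝ V := fun x => g x - g x₀ with hh'
  set W : Submodule ℝ (EuclideanSpace ℝ V) := Submodule.span ℝ (Set.range h) with hW'
  have hWle : Module.finrank ℝ W ≤ Fintype.card V - 1 := by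
    have hsub : Set.range h ⊆
        insert 0 ((fun x => h x) '' (({x₀}ᶜ : Finset V) : Set V)) := by
      rintro - ⟨x, rfl⟩
      by_cases hx : x = x₀
      · subst hx; left; simp [hh']
      · right; exact ⟨x, by simpa using hx, rfl⟩
    have : W ≤ Submodule.span ℝ ((Finset.image h ({x₀}ᶜ : Finset V) : Finset _) : Set _) := by
      rw [hW']
      refine Submodule.span_le.mpr (hsub.trans ?_)
      rw [Finset.coe_image]
      exact Set.insert_subset (Submodule.zero_mem _) Submodule.subset_span
    refine (Submodule.finrank_mono this).trans ?_
    refine (finrank_span_finset_le_card _).trans ?_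
    calc (Finset.image h ({x₀}ᶜ : Finset V)).card
        ≤ ({x₀}ᶜ : Finset V).card := Finset.card_image_le
      _ = Fintype.card V - 1 := by simp [Finset.card_compl]
  -- orthonormal basis of W
  set d : ℕ := Module.finrank ℝ W with hd'
  obtain ⟨ψ, hψ⟩ := my_embed_dist hWle
  set bW := stdOrthonormalBasis ℝ W with hbW'
  set ι : V → W := fun x => ⟨h x, Submodule.subset_span (Set.mem_range_self x)⟩ with hι'
  refine ⟨fun x => ψ (bW.repr (ι x)), fun x x' y y' hx hy => ?_⟩
  have dist_f : ∀ u v : V, dist (ψ (bW.repr (ι u))) (ψ (bW.repr (ι v))) = dist (g u) (g v) := by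
    intro u v
    rw [hψ, bW.repr.dist_map, Subtype.dist_eq]
    show dist (h u) (h v) = _
    rw [hh']
    simp only [dist_eq_norm]
    congr 1
    abel
  rw [dist_f, dist_f]
  have key : dist (g x) (g x') = dist (g y) (g y') ↔
      (if G.Adj x x' then (1:ℝ) else 0) = (if G.Adj y y' then (1:ℝ) else 0) := by
    constructor
    · intro hdd
      have h1 := distg x x' hx
      have h2 := distg y y' hy
      rw [hdd] at h1
      have heq := h1.symm.trans h2
      have h3 : 2 * t * (if G.Adj x x' then (1:ℝ) else 0)
          = 2 * t * (if G.Adj y y' then (1:ℝ) else 0) := by linarith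
      exact mul_left_cancel₀ (by positivity) h3
    · intro hii
      have h1 := distg x x' hx
      have h2 := distg y y' hy
      rw [hii] at h1
      have hsq : dist (g x) (g x') ^ 2 = dist (g y) (g y') ^ 2 := h1.trans h2.symm
      rw [← Real.sqrt_sq (dist_nonneg (x := g x) (y := g x')),
        ← Real.sqrt_sq (dist_nonneg (x := g y) (y := g y')), hsq]
  rw [key]
  by_cases hxa : G.Adj x x' <;> by_cases hya : G.Adj y y' <;> simp [hxa, hya]
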